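/- If X and Y are independent random variables with laws F, G having finite first moments and positive means m_X, m_Y, then T(X+Y) ≤ (m_X/(m_X+m_Y)) T(X) + (m_Y/(m_X+m_Y)) T(Y). -/

import Mathlib

open MeasureTheory Complex

/-- Fourier transform `f̂(ξ) = ∫ e^{-iξx} dF(x)` of a measure on `ℝ`. -/
noncomputable def ft (μ : Measure ℝ) (ξ : ℝ) : ℂ :=
  ∫ x, Complex.exp (-(Complex.I * ξ * x)) ∂μ

/-- Derivative of the Fourier transform: `f̂'(ξ) = -i ∫ x e^{-iξx} dF(x)`. -/
noncomputable def ft' (μ : Measure ℝ) (ξ : ℝ) : ℂ :=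
  ∫ x, -(Complex.I * x) * Complex.exp (-(Complex.I * ξ * x)) ∂μ

/-- The Fourier-based inequality index `T(F) = (1/2) sup_ξ |f̂(ξ) - f̂'(ξ)/f̂'(0)|`. -/
noncomputable def Tindex (μ : Measure ℝ) : ℝ :=
  (1 / 2) * ⨆ ξ : ℝ, ‖ft μ ξ - ft' μ ξ / ft' μ 0‖


open ProbabilityTheory


section aux0

lemma indep_integral_mul_C {Ω : Type*} [MeasurableSpace Ω] {P : Measure Ω}
    {U V : Ω → ℂ} (h : IndepFun U V P) (hU : Integrable U P) (hV : Integrable V P) :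
    ∫ ω, U ω * V ω ∂P = (∫ ω, U ω ∂P) * ∫ ω, V ω ∂P := by
  have hUV : Integrable (fun ω => U ω * V ω) P := h.integrable_mul hU hV
  have hUr : Integrable (fun ω => (U ω).re) P := hU.re
  have hUi : Integrable (fun ω => (U ω).im) P := hU.im
  have hVr : Integrable (fun ω => (V ω).re) P := hV.re
  have hVi : Integrable (fun ω => (V ω).im) P := hV.im
  have hrr : IndepFun (fun ω => (U ω).re) (fun ω => (V ω).re) P :=
    h.comp Complex.measurable_re Complex.measurable_re
  have hri : IndepFun (fun ω => (U ω).re) (fun ω => (V ω).im) P :=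
    h.comp Complex.measurable_re Complex.measurable_im
  have hir : IndepFun (fun ω => (U ω).im) (fun ω => (V ω).re) P :=
    h.comp Complex.measurable_im Complex.measurable_re
  have hii : IndepFun (fun ω => (U ω).im) (fun ω => (V ω).im) P :=
    h.comp Complex.measurable_im Complex.measurable_im
  have irr : ∫ ω, (U ω).re * (V ω).re ∂P = (∫ ω, (U ω).re ∂P) * ∫ ω, (V ω).re ∂P :=
    hrr.integral_mul_eq_mul_integral hUr.aestronglyMeasurable hVr.aestronglyMeasurable
  have iri : ∫ ω, (U ω).re * (V ω).im ∂P = (∫ ω, (U ω).re ∂P) * ∫ ω, (V ω).im ∂P :=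
    hri.integral_mul_eq_mul_integral hUr.aestronglyMeasurable hVi.aestronglyMeasurable
  have iir : ∫ ω, (U ω).im * (V ω).re ∂P = (∫ ω, (U ω).im ∂P) * ∫ ω, (V ω).re ∂P :=
    hir.integral_mul_eq_mul_integral hUi.aestronglyMeasurable hVr.aestronglyMeasurable
  have iii : ∫ ω, (U ω).im * (V ω).im ∂P = (∫ ω, (U ω).im ∂P) * ∫ ω, (V ω).im ∂P :=
    hii.integral_mul_eq_mul_integral hUi.aestronglyMeasurable hVi.aestronglyMeasurable
  have kUV := integral_re hUV
  have kUV' := integral_im hUV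
  have kU := integral_re hU; have kU' := integral_im hU
  have kV := integral_re hV; have kV' := integral_im hV
  simp only [RCLike.re_to_complex, RCLike.im_to_complex] at kUV kUV' kU kU' kV kV'
  have m1 : Integrable (fun ω => (U ω).re * (V ω).re) P := hrr.integrable_mul hUr hVr
  have m2 : Integrable (fun ω => (U ω).im * (V ω).im) P := hii.integrable_mul hUi hVi
  have m3 : Integrable (fun ω => (U ω).re * (V ω).im) P := hri.integrable_mul hUr hVi
  have m4 : Integrable (fun ω => (U ω).im * (V ω).re) P := hir.integrable_mul hUi hVr
  apply Complex.ext
  · rw [← kUV, Complex.mul_re, ← kU, ← kV, ← kU', ← kV', ← irr, ← iii,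
      ← integral_sub m1 m2]
    exact integral_congr_ae (Filter.Eventually.of_forall fun ω => by simp [Complex.mul_re])
  · rw [← kUV', Complex.mul_im, ← kU, ← kV, ← kU', ← kV', ← iri, ← iir,
      ← integral_add m3 m4]
    exact integral_congr_ae (Filter.Eventually.of_forall fun ω => by simp [Complex.mul_im])
end aux0

section aux
variable {Ω : Type*} [MeasurableSpace Ω] {P : Measure Ω}

lemma cont_e (ξ : ℝ) : Continuous fun x : ℝ => Complex.exp (-(Complex.I * ξ * x)) := by
  fun_prop

lemma cont_e' (ξ : ℝ) :
    Continuous fun x : ℝ => -(Complex.I * x) * Complex.exp (-(Complex.I * ξ * x)) := by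
  fun_prop

lemma norm_e (ξ x : ℝ) : ‖Complex.exp (-(Complex.I * ξ * x))‖ = 1 := by
  simp [Complex.norm_exp]

lemma norm_e' (ξ x : ℝ) :
    ‖-(Complex.I * x) * Complex.exp (-(Complex.I * ξ * x))‖ = |x| := by
  rw [norm_mul, norm_e, mul_one, norm_neg, norm_mul]
  simp

lemma ft_map (Z : Ω → ℝ) (hZ : Measurable Z) (ξ : ℝ) :
    ft (Measure.map Z P) ξ = ∫ ω, Complex.exp (-(Complex.I * ξ * Z ω)) ∂P := by
  rw [ft, integral_map hZ.aemeasurable (cont_e ξ).aestronglyMeasurable]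

lemma ft'_map (Z : Ω → ℝ) (hZ : Measurable Z) (ξ : ℝ) :
    ft' (Measure.map Z P) ξ
      = ∫ ω, -(Complex.I * Z ω) * Complex.exp (-(Complex.I * ξ * Z ω)) ∂P := by
  rw [ft', integral_map hZ.aemeasurable (cont_e' ξ).aestronglyMeasurable]

lemma int_e [IsProbabilityMeasure P] (Z : Ω → ℝ) (hZ : Measurable Z) (ξ : ℝ) :
    Integrable (fun ω => Complex.exp (-(Complex.I * ξ * Z ω))) P := by
  refine (integrable_const (1 : ℝ)).mono' (((cont_e ξ).measurable.comp hZ).aestronglyMeasurable)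
    (Filter.Eventually.of_forall fun ω => ?_)
  rw [norm_e]

lemma int_e' (Z : Ω → ℝ) (hZ : Measurable Z) (hZi : Integrable Z P) (ξ : ℝ) :
    Integrable (fun ω => -(Complex.I * Z ω) * Complex.exp (-(Complex.I * ξ * Z ω))) P := by
  refine hZi.abs.mono' (((cont_e' ξ).measurable.comp hZ).aestronglyMeasurable)
    (Filter.Eventually.of_forall fun ω => ?_)
  rw [norm_e']

lemma ft'_zero (Z : Ω → ℝ) (hZ : Measurable Z) (hZi : Integrable Z P) :
    ft' (Measure.map Z P) 0 = -(Complex.I * (∫ ω, Z ω ∂P : ℝ)) := by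
  rw [ft'_map Z hZ]
  simp only [Complex.ofReal_zero, mul_zero, zero_mul, neg_zero, Complex.exp_zero, mul_one]
  rw [integral_neg, integral_const_mul]
  norm_num
  exact integral_ofReal

lemma norm_ft_le [IsProbabilityMeasure P] (Z : Ω → ℝ) (hZ : Measurable Z) (ξ : ℝ) :
    ‖ft (Measure.map Z P) ξ‖ ≤ 1 := by
  rw [ft_map Z hZ]
  calc ‖∫ ω, Complex.exp (-(Complex.I * ξ * Z ω)) ∂P‖
      ≤ ∫ ω, ‖Complex.exp (-(Complex.I * ξ * Z ω))‖ ∂P := norm_integral_le_integral_norm _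
    _ = ∫ (_ : Ω), (1:ℝ) ∂P := by simp [Complex.norm_exp]
    _ = 1 := by simp

lemma norm_ft'_le (Z : Ω → ℝ) (hZ : Measurable Z) (ξ : ℝ) :
    ‖ft' (Measure.map Z P) ξ‖ ≤ ∫ ω, |Z ω| ∂P := by
  rw [ft'_map Z hZ]
  calc ‖∫ ω, -(Complex.I * Z ω) * Complex.exp (-(Complex.I * ξ * Z ω)) ∂P‖
      ≤ ∫ ω, ‖-(Complex.I * Z ω) * Complex.exp (-(Complex.I * ξ * Z ω))‖ ∂P :=
        norm_integral_le_integral_norm _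
    _ = ∫ ω, |Z ω| ∂P := by simp [Complex.norm_exp]

end aux

theorem stmt_4 {Ω : Type*} [MeasurableSpace Ω] (P : Measure Ω) [IsProbabilityMeasure P]
    (X Y : Ω → ℝ) (hX : Measurable X) (hY : Measurable Y)
    (hindep : ProbabilityTheory.IndepFun X Y P)
    (hXint : Integrable X P) (hYint : Integrable Y P)
    (mX mY : ℝ) (hmX : mX = ∫ ω, X ω ∂P) (hmY : mY = ∫ ω, Y ω ∂P)
    (hmXpos : 0 < mX) (hmYpos : 0 < mY) :
    Tindex (Measure.map (fun ω => X ω + Y ω) P)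
      ≤ mX / (mX + mY) * Tindex (Measure.map X P)
        + mY / (mX + mY) * Tindex (Measure.map Y P) := by
  have hXY : Measurable fun ω => X ω + Y ω := hX.add hY
  have hXYint : Integrable (fun ω => X ω + Y ω) P := hXint.add hYint
  set μ := Measure.map X P with hμ
  set ν := Measure.map Y P with hν
  set ρ := Measure.map (fun ω => X ω + Y ω) P with hρ
  set m := mX + mY with hm
  have hmpos : 0 < m := by positivity
  have f0 : ft' μ 0 = -(Complex.I * (mX : ℝ)) := by
    rw [hμ, ft'_zero X hX hXint, ← hmX]
  have g0 : ft' ν 0 = -(Complex.I * (mY : ℝ)) := by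
    rw [hν, ft'_zero Y hY hYint, ← hmY]
  have h0 : ft' ρ 0 = -(Complex.I * ((mX : ℂ) + (mY : ℂ))) := by
    rw [hρ, ft'_zero _ hXY hXYint, integral_add hXint hYint, ← hmX, ← hmY]
    push_cast; ring
  have hmul : ∀ ξ, ft ρ ξ = ft μ ξ * ft ν ξ := by
    intro ξ
    rw [hρ, hμ, hν, ft_map _ hXY, ft_map X hX, ft_map Y hY]
    have heq : ∀ ω, Complex.exp (-(Complex.I * ξ * ((X ω + Y ω : ℝ) : ℂ)))
        = Complex.exp (-(Complex.I * ξ * X ω)) * Complex.exp (-(Complex.I * ξ * Y ω)) := by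
      intro ω; rw [← Complex.exp_add]; push_cast; ring_nf
    simp_rw [heq]
    exact indep_integral_mul_C
      (hindep.comp (cont_e ξ).measurable (cont_e ξ).measurable)
      (int_e X hX ξ) (int_e Y hY ξ)
  have hmul' : ∀ ξ, ft' ρ ξ = ft' μ ξ * ft ν ξ + ft μ ξ * ft' ν ξ := by
    intro ξ
    rw [hρ, hμ, hν, ft'_map _ hXY, ft'_map X hX, ft_map Y hY, ft_map X hX, ft'_map Y hY]
    have heq : ∀ ω, -(Complex.I * ((X ω + Y ω : ℝ) : ℂ))
          * Complex.exp (-(Complex.I * ξ * ((X ω + Y ω : ℝ) : ℂ)))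
        = (-(Complex.I * X ω) * Complex.exp (-(Complex.I * ξ * X ω)))
            * Complex.exp (-(Complex.I * ξ * Y ω))
          + Complex.exp (-(Complex.I * ξ * X ω))
            * (-(Complex.I * Y ω) * Complex.exp (-(Complex.I * ξ * Y ω))) := by
      intro ω
      have e1 : Complex.exp (-(Complex.I * ξ * ((X ω : ℂ) + (Y ω : ℂ))))
          = Complex.exp (-(Complex.I * ξ * X ω)) * Complex.exp (-(Complex.I * ξ * Y ω)) := by
        rw [← Complex.exp_add]; ring_nf
      push_cast
      rw [e1]; ring
    simp_rw [heq]
    have int1 : Integrable (fun ω =>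
        (-(Complex.I * X ω) * Complex.exp (-(Complex.I * ξ * X ω)))
          * Complex.exp (-(Complex.I * ξ * Y ω))) P := by
      refine hXint.abs.mono'
        ((((cont_e' ξ).measurable.comp hX).mul
          ((cont_e ξ).measurable.comp hY)).aestronglyMeasurable)
        (Filter.Eventually.of_forall fun ω => ?_)
      rw [norm_mul, norm_e', norm_e, mul_one]
    have int2 : Integrable (fun ω =>
        Complex.exp (-(Complex.I * ξ * X ω))
          * (-(Complex.I * Y ω) * Complex.exp (-(Complex.I * ξ * Y ω)))) P := by
      refine hYint.abs.mono'
        ((((cont_e ξ).measurable.comp hX).mul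
          ((cont_e' ξ).measurable.comp hY)).aestronglyMeasurable)
        (Filter.Eventually.of_forall fun ω => ?_)
      rw [norm_mul, norm_e', norm_e, one_mul]
    rw [integral_add int1 int2]
    congr 1
    · exact indep_integral_mul_C
        (hindep.comp (cont_e' ξ).measurable (cont_e ξ).measurable)
        (int_e' X hX hXint ξ) (int_e Y hY ξ)
    · exact indep_integral_mul_C
        (hindep.comp (cont_e ξ).measurable (cont_e' ξ).measurable)
        (int_e X hX ξ) (int_e' Y hY hYint ξ)
  have hmx : (mX : ℂ) ≠ 0 := by exact_mod_cast hmXpos.ne'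
  have hmy : (mY : ℂ) ≠ 0 := by exact_mod_cast hmYpos.ne'
  have hmm : (mX : ℂ) + (mY : ℂ) ≠ 0 := by
    have : (m : ℂ) ≠ 0 := by exact_mod_cast hmpos.ne'
    rw [hm] at this; push_cast at this; exact this
  have key : ∀ ξ, ft ρ ξ - ft' ρ ξ / ft' ρ 0
      = (↑(mX / m) * (ft ν ξ * (ft μ ξ - ft' μ ξ / ft' μ 0))
        + ↑(mY / m) * (ft μ ξ * (ft ν ξ - ft' ν ξ / ft' ν 0))) := by
    intro ξ
    rw [hmul ξ, hmul' ξ, h0, f0, g0, hm]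
    push_cast
    field_simp
    ring
  -- bounds for BddAbove
  have MXnn : 0 ≤ ∫ ω, |X ω| ∂P := integral_nonneg fun ω => abs_nonneg _
  have MYnn : 0 ≤ ∫ ω, |Y ω| ∂P := integral_nonneg fun ω => abs_nonneg _
  have nf0 : ‖ft' μ 0‖ = mX := by
    rw [f0]; simp [abs_of_pos hmXpos]
  have ng0 : ‖ft' ν 0‖ = mY := by
    rw [g0]; simp [abs_of_pos hmYpos]
  have hCf : ∀ ξ, ‖ft μ ξ - ft' μ ξ / ft' μ 0‖ ≤ 1 + (∫ ω, |X ω| ∂P) / mX := by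
    intro ξ
    calc ‖ft μ ξ - ft' μ ξ / ft' μ 0‖ ≤ ‖ft μ ξ‖ + ‖ft' μ ξ / ft' μ 0‖ := norm_sub_le _ _
      _ = ‖ft μ ξ‖ + ‖ft' μ ξ‖ / ‖ft' μ 0‖ := by rw [norm_div]
      _ ≤ 1 + (∫ ω, |X ω| ∂P) / mX := by
          rw [nf0]
          exact add_le_add (norm_ft_le X hX ξ)
            (div_le_div_of_nonneg_right (norm_ft'_le X hX ξ) hmXpos.le)
  have hCg : ∀ ξ, ‖ft ν ξ - ft' ν ξ / ft' ν 0‖ ≤ 1 + (∫ ω, |Y ω| ∂P) / mY := by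
    intro ξ
    calc ‖ft ν ξ - ft' ν ξ / ft' ν 0‖ ≤ ‖ft ν ξ‖ + ‖ft' ν ξ / ft' ν 0‖ := norm_sub_le _ _
      _ = ‖ft ν ξ‖ + ‖ft' ν ξ‖ / ‖ft' ν 0‖ := by rw [norm_div]
      _ ≤ 1 + (∫ ω, |Y ω| ∂P) / mY := by
          rw [ng0]
          exact add_le_add (norm_ft_le Y hY ξ)
            (div_le_div_of_nonneg_right (norm_ft'_le Y hY ξ) hmYpos.le)
  have hbf : BddAbove (Set.range fun ξ : ℝ => ‖ft μ ξ - ft' μ ξ / ft' μ 0‖) :=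
    ⟨_, by rintro _ ⟨ξ, rfl⟩; exact hCf ξ⟩
  have hbg : BddAbove (Set.range fun ξ : ℝ => ‖ft ν ξ - ft' ν ξ / ft' ν 0‖) :=
    ⟨_, by rintro _ ⟨ξ, rfl⟩; exact hCg ξ⟩
  set Sf := ⨆ ξ : ℝ, ‖ft μ ξ - ft' μ ξ / ft' μ 0‖ with hSf
  set Sg := ⨆ ξ : ℝ, ‖ft ν ξ - ft' ν ξ / ft' ν 0‖ with hSg
  have hle_f : ∀ ξ, ‖ft μ ξ - ft' μ ξ / ft' μ 0‖ ≤ Sf := fun ξ => le_ciSup hbf ξ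
  have hle_g : ∀ ξ, ‖ft ν ξ - ft' ν ξ / ft' ν 0‖ ≤ Sg := fun ξ => le_ciSup hbg ξ
  have hSfnn : 0 ≤ Sf := le_trans (norm_nonneg _) (hle_f 0)
  have hSgnn : 0 ≤ Sg := le_trans (norm_nonneg _) (hle_g 0)
  have hcoefX : (0:ℝ) ≤ mX / m := by positivity
  have hcoefY : (0:ℝ) ≤ mY / m := by positivity
  have main : (⨆ ξ : ℝ, ‖ft ρ ξ - ft' ρ ξ / ft' ρ 0‖) ≤ mX / m * Sf + mY / m * Sg := by
    refine ciSup_le fun ξ => ?_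
    rw [key ξ]
    calc ‖↑(mX / m) * (ft ν ξ * (ft μ ξ - ft' μ ξ / ft' μ 0))
          + ↑(mY / m) * (ft μ ξ * (ft ν ξ - ft' ν ξ / ft' ν 0))‖
        ≤ ‖↑(mX / m) * (ft ν ξ * (ft μ ξ - ft' μ ξ / ft' μ 0))‖
          + ‖↑(mY / m) * (ft μ ξ * (ft ν ξ - ft' ν ξ / ft' ν 0))‖ := norm_add_le _ _
      _ = mX / m * (‖ft ν ξ‖ * ‖ft μ ξ - ft' μ ξ / ft' μ 0‖)
          + mY / m * (‖ft μ ξ‖ * ‖ft ν ξ - ft' ν ξ / ft' ν 0‖) := by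
          rw [norm_mul, norm_mul, norm_mul, norm_mul, Complex.norm_real, Complex.norm_real,
            Real.norm_eq_abs, Real.norm_eq_abs, _root_.abs_of_nonneg hcoefX, _root_.abs_of_nonneg hcoefY]
      _ ≤ mX / m * (1 * Sf) + mY / m * (1 * Sg) := by
          gcongr
          · exact norm_ft_le Y hY ξ
          · exact hle_f ξ
          · exact norm_ft_le X hX ξ
          · exact hle_g ξ
      _ = mX / m * Sf + mY / m * Sg := by ring
  show (1/2 : ℝ) * (⨆ ξ : ℝ, ‖ft ρ ξ - ft' ρ ξ / ft' ρ 0‖)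
      ≤ mX / m * ((1/2) * Sf) + mY / m * ((1/2) * Sg)
  nlinarith [main]
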